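/- Let Γ₁ and Γ₂ be cospectral graphs. Then the Cartesian product of the all-positive signed graph Γ₁⁺ and the all-negative signed graph Γ₂⁻, with adjacency matrix A_{Γ₁} ⊗ I − I ⊗ A_{Γ₂}, has a symmetric spectrum. -/
import Mathlib

open Polynomial Matrix Kronecker

private lemma my_charpoly_conj {N : Type*} [Fintype N] [DecidableEq N]
    (P A Q : Matrix N N ℝ) (h1 : P * Q = 1) :
    (P * A * Q).charpoly = A.charpoly := by
  have hmapPQ : P.map (C : ℝ → ℝ[X]) * Q.map C = 1 := by
    have := congrArg (fun M : Matrix N N ℝ => M.map (C : ℝ → ℝ[X])) h1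
    simpa [Matrix.map_mul] using this
  have key : charmatrix (P * A * Q) = P.map C * charmatrix A * Q.map C := by
    rw [charmatrix, charmatrix]
    rw [Matrix.mul_sub, Matrix.sub_mul]
    congr 1
    · rw [← (Matrix.scalar_commute (X : ℝ[X]) (fun r => Commute.all _ _) (P.map C)).eq,
        mul_assoc, hmapPQ, mul_one]
    · simp only [RingHom.mapMatrix_apply]
      rw [Matrix.map_mul, Matrix.map_mul]
  rw [Matrix.charpoly, Matrix.charpoly, key, det_mul, det_mul]
  have hdet : (P.map (C : ℝ → ℝ[X])).det * (Q.map C).det = 1 := by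
    rw [← det_mul, hmapPQ, det_one]
  calc (P.map C).det * (charmatrix A).det * (Q.map C).det
      = (charmatrix A).det * ((P.map C).det * (Q.map C).det) := by ring
    _ = (charmatrix A).det := by rw [hdet, mul_one]

private lemma my_charpoly_diagonal {N : Type*} [Fintype N] [DecidableEq N]
    (d : N → ℝ) : (Matrix.diagonal d).charpoly = ∏ i, (X - C (d i)) := by
  have h : charmatrix (Matrix.diagonal d) = Matrix.diagonal (fun i => X - C (d i)) := by
    ext i j
    by_cases hij : i = j
    · subst hij; simp [charmatrix_apply_eq]
    · rw [charmatrix_apply_ne _ _ _ hij, Matrix.diagonal_apply_ne _ hij,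
        Matrix.diagonal_apply_ne _ hij, map_zero, neg_zero]
  rw [Matrix.charpoly, h, det_diagonal]

private lemma my_charpoly_hermitian {N : Type*} [Fintype N] [DecidableEq N]
    {A : Matrix N N ℝ} (hA : A.IsHermitian) :
    A.charpoly = ∏ i, (X - C (hA.eigenvalues i)) := by
  have hU1 : (hA.eigenvectorUnitary : Matrix N N ℝ) * star (hA.eigenvectorUnitary : Matrix N N ℝ) = 1 :=
    Matrix.mem_unitaryGroup_iff.mp hA.eigenvectorUnitary.2
  have hid : (RCLike.ofReal ∘ hA.eigenvalues : N → ℝ) = hA.eigenvalues := rfl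
  have hspec := hA.spectral_theorem
  rw [hid] at hspec
  rw [show A.charpoly = ((hA.eigenvectorUnitary : Matrix N N ℝ) * Matrix.diagonal hA.eigenvalues
      * star (hA.eigenvectorUnitary : Matrix N N ℝ)).charpoly from congrArg _ hspec,
    my_charpoly_conj _ _ _ hU1, my_charpoly_diagonal]

private lemma my_roots_hermitian {N : Type*} [Fintype N] [DecidableEq N]
    {A : Matrix N N ℝ} (hA : A.IsHermitian) :
    A.charpoly.roots = Multiset.map hA.eigenvalues Finset.univ.val := by
  rw [my_charpoly_hermitian hA]
  rw [Finset.prod_eq_multiset_prod]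
  rw [show Multiset.map (fun i => X - C (hA.eigenvalues i)) Finset.univ.val
      = Multiset.map (fun a => X - C a) (Multiset.map hA.eigenvalues Finset.univ.val) by
    rw [Multiset.map_map]; rfl]
  exact roots_multiset_prod_X_sub_C _

theorem cartesian_pos_neg_symmetric_spectrum (n m : ℕ)
    (A₁ : Matrix (Fin n) (Fin n) ℝ) (A₂ : Matrix (Fin m) (Fin m) ℝ)
    (h₁sym : A₁.IsSymm) (h₂sym : A₂.IsSymm)
    (h₁val : ∀ i j, A₁ i j = 0 ∨ A₁ i j = 1) (h₂val : ∀ i j, A₂ i j = 0 ∨ A₂ i j = 1)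
    (h₁diag : ∀ i, A₁ i i = 0) (h₂diag : ∀ i, A₂ i i = 0)
    (hcospec : A₁.charpoly = A₂.charpoly) :
    ∀ lam : ℝ,
      Multiset.count (-lam)
        (A₁ ⊗ₖ (1 : Matrix (Fin m) (Fin m) ℝ)
          - (1 : Matrix (Fin n) (Fin n) ℝ) ⊗ₖ A₂).charpoly.roots
      = Multiset.count lam
        (A₁ ⊗ₖ (1 : Matrix (Fin m) (Fin m) ℝ)
          - (1 : Matrix (Fin n) (Fin n) ℝ) ⊗ₖ A₂).charpoly.roots := by
  have hnm : n = m := by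
    have h1 := Matrix.charpoly_natDegree_eq_dim A₁
    have h2 := Matrix.charpoly_natDegree_eq_dim A₂
    rw [hcospec, h2] at h1
    simpa using h1.symm
  subst hnm
  intro lam
  have h₁ : A₁.IsHermitian := by
    rwa [Matrix.IsHermitian, Matrix.conjTranspose_eq_transpose_of_trivial]
  have h₂ : A₂.IsHermitian := by
    rwa [Matrix.IsHermitian, Matrix.conjTranspose_eq_transpose_of_trivial]
  let e₁ : Fin n → ℝ := h₁.eigenvalues
  let e₂ : Fin n → ℝ := h₂.eigenvalues
  let U₁ : Matrix (Fin n) (Fin n) ℝ := (h₁.eigenvectorUnitary : Matrix (Fin n) (Fin n) ℝ)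
  let U₂ : Matrix (Fin n) (Fin n) ℝ := (h₂.eigenvectorUnitary : Matrix (Fin n) (Fin n) ℝ)
  have hU₁1 : U₁ * star U₁ = 1 := Matrix.mem_unitaryGroup_iff.mp h₁.eigenvectorUnitary.2
  have hU₂1 : U₂ * star U₂ = 1 := Matrix.mem_unitaryGroup_iff.mp h₂.eigenvectorUnitary.2
  have hspec₁ : A₁ = U₁ * Matrix.diagonal e₁ * star U₁ := by
    have := h₁.spectral_theorem
    rwa [show (RCLike.ofReal ∘ h₁.eigenvalues : Fin n → ℝ) = e₁ from rfl] at this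
  have hspec₂ : A₂ = U₂ * Matrix.diagonal e₂ * star U₂ := by
    have := h₂.spectral_theorem
    rwa [show (RCLike.ofReal ∘ h₂.eigenvalues : Fin n → ℝ) = e₂ from rfl] at this
  have hss : Multiset.map e₁ Finset.univ.val = Multiset.map e₂ Finset.univ.val := by
    have r1 := my_roots_hermitian h₁
    have r2 := my_roots_hermitian h₂
    rw [← r1, ← r2, hcospec]
  set M := A₁ ⊗ₖ (1 : Matrix (Fin n) (Fin n) ℝ) - (1 : Matrix (Fin n) (Fin n) ℝ) ⊗ₖ A₂ with hM
  have hdiag : (Matrix.diagonal e₁ ⊗ₖ (1 : Matrix (Fin n) (Fin n) ℝ)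
      - (1 : Matrix (Fin n) (Fin n) ℝ) ⊗ₖ Matrix.diagonal e₂)
      = Matrix.diagonal (fun p : Fin n × Fin n => e₁ p.1 - e₂ p.2) := by
    rw [← Matrix.diagonal_one, Matrix.diagonal_kronecker_diagonal,
      Matrix.diagonal_kronecker_diagonal, Matrix.diagonal_sub]
    congr 1
    funext p
    simp
  have hdecomp : M = (U₁ ⊗ₖ U₂) * Matrix.diagonal (fun p : Fin n × Fin n => e₁ p.1 - e₂ p.2)
      * ((star U₁) ⊗ₖ (star U₂)) := by
    rw [← hdiag, Matrix.mul_sub, Matrix.sub_mul, ← Matrix.mul_kronecker_mul,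
      ← Matrix.mul_kronecker_mul, ← Matrix.mul_kronecker_mul, ← Matrix.mul_kronecker_mul,
      Matrix.mul_one, Matrix.mul_one, hU₁1, hU₂1, ← hspec₁, ← hspec₂, hM]
  have hPQ : (U₁ ⊗ₖ U₂) * ((star U₁) ⊗ₖ (star U₂)) = 1 := by
    rw [← Matrix.mul_kronecker_mul, hU₁1, hU₂1, Matrix.one_kronecker_one]
  have hroots : M.charpoly.roots
      = Multiset.map (fun p : Fin n × Fin n => e₁ p.1 - e₂ p.2) Finset.univ.val := by
    rw [hdecomp, my_charpoly_conj _ _ _ hPQ, my_charpoly_diagonal,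
      Finset.prod_eq_multiset_prod,
      show Multiset.map (fun p : Fin n × Fin n => X - C (e₁ p.1 - e₂ p.2)) Finset.univ.val
        = Multiset.map (fun a => X - C a)
            (Multiset.map (fun p : Fin n × Fin n => e₁ p.1 - e₂ p.2) Finset.univ.val) by
        rw [Multiset.map_map]; rfl,
      roots_multiset_prod_X_sub_C]
  have hT : M.charpoly.roots = (Multiset.map e₁ Finset.univ.val).bind
      (fun a => (Multiset.map e₁ Finset.univ.val).map (fun b => a - b)) := by
    rw [hroots, Multiset.bind_map, hss]
    simp only [Multiset.map_map, Function.comp]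
    rw [show (Finset.univ : Finset (Fin n × Fin n)).val
        = (Finset.univ : Finset (Fin n)).val ×ˢ (Finset.univ : Finset (Fin n)).val by
      rw [← Finset.product_val, Finset.univ_product_univ]]
    show Multiset.map _ (Finset.univ.val.bind fun a => Finset.univ.val.map (Prod.mk a)) = _
    rw [Multiset.map_bind]
    simp only [Multiset.map_map, Function.comp]
  have hneg : Multiset.map (fun x : ℝ => -x) (M.charpoly.roots) = M.charpoly.roots := by
    conv_lhs => rw [hT]
    conv_rhs => rw [hT]
    rw [Multiset.map_bind]
    simp only [Multiset.map_map, Function.comp, neg_sub]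
    rw [Multiset.bind_map, Multiset.bind_map]
    exact Multiset.bind_map_comm (f := fun a b => e₁ b - e₁ a) _ _
  conv_lhs => rw [← hneg]
  rw [show (-lam) = (fun x : ℝ => -x) lam from rfl,
    Multiset.count_map_eq_count' _ _ neg_injective]
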